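/- Let (X_n)_{n≥1} be quasi-stationary random variables with zero expectations: E X_i = 0, Var(X_i) = σ_i² < ∞, and |Cov(X_i, X_j)| ≤ ρ(|i − j|) σ_i σ_j for all i, j, where (ρ(k))_{k≥0} is a sequence of nonnegative numbers with ρ(0) = 1. If the real coefficients (β_i)_{i≥1} satisfy ∑_{i≥2} β_i² σ_i² (log i)² (∑_{j=0}^i ρ(j)) < ∞, then the series ∑_{i≥1} β_i X_i converges almost surely. -/

import Mathlib

open Filter Finset MeasureTheory ProbabilityTheory

section helpers
variable {Ω : Type*} {m0 : MeasurableSpace Ω} {μ : Measure Ω}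

lemma rm_integrable_mul {f g : Ω → ℝ} (hf : MemLp f 2 μ) (hg : MemLp g 2 μ) :
    Integrable (fun ω => f ω * g ω) μ := by
  refine (((hf.integrable_sq).add (hg.integrable_sq)).const_mul (1/2 : ℝ)).mono'
    (hf.aestronglyMeasurable.mul hg.aestronglyMeasurable) ?_
  filter_upwards with ω
  simp only [Pi.add_apply, Real.norm_eq_abs, abs_mul]
  nlinarith [sq_nonneg (|f ω| - |g ω|), sq_abs (f ω), sq_abs (g ω), abs_nonneg (f ω), abs_nonneg (g ω)]

lemma rm_cs {f g : Ω → ℝ} (hf : MemLp f 2 μ) (hg : MemLp g 2 μ) :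
    ∫ ω, f ω * g ω ∂μ ≤ Real.sqrt (∫ ω, f ω ^ 2 ∂μ) * Real.sqrt (∫ ω, g ω ^ 2 ∂μ) := by
  have h1 : ∫ ω, f ω * g ω ∂μ ≤ ∫ ω, |f ω| * |g ω| ∂μ := by
    refine integral_mono (rm_integrable_mul hf hg) ((rm_integrable_mul hf hg).abs.congr ?_) ?_
    · filter_upwards with ω; simp [abs_mul]
    · intro ω; calc f ω * g ω ≤ |f ω * g ω| := le_abs_self _
        _ = |f ω| * |g ω| := abs_mul _ _
  refine h1.trans ?_
  have hconj : (2:ℝ).HolderConjugate 2 := Real.holderConjugate_iff.mpr ⟨one_lt_two, by norm_num⟩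
  have h2 := integral_mul_le_Lp_mul_Lq_of_nonneg hconj
    (Eventually.of_forall fun ω => abs_nonneg (f ω)) (Eventually.of_forall fun ω => abs_nonneg (g ω))
    (by rw [show ENNReal.ofReal 2 = 2 by norm_num]; exact hf.abs) (by rw [show ENNReal.ofReal 2 = 2 by norm_num]; exact hg.abs)
  have e1 : ∀ h : Ω → ℝ, ∫ ω, |h ω| ^ (2:ℝ) ∂μ = ∫ ω, h ω ^ 2 ∂μ := by
    intro h; refine integral_congr_ae (Eventually.of_forall fun ω => ?_)
    have h2' : |h ω| ^ (2:ℝ) = |h ω| ^ (2:ℕ) := by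
      rw [← Real.rpow_natCast]; norm_num
    simp only [h2', sq_abs]
  rw [e1 f, e1 g] at h2
  refine h2.trans_eq ?_
  rw [Real.sqrt_eq_rpow, Real.sqrt_eq_rpow]


lemma rm_int_sq_nonneg (f : Ω → ℝ) : 0 ≤ ∫ ω, f ω ^ 2 ∂μ :=
  integral_nonneg fun ω => sq_nonneg _

lemma rm_add_sq {f g : Ω → ℝ} (hf : MemLp f 2 μ) (hg : MemLp g 2 μ) :
    ∫ ω, (f ω + g ω) ^ 2 ∂μ ≤
      (Real.sqrt (∫ ω, f ω ^ 2 ∂μ) + Real.sqrt (∫ ω, g ω ^ 2 ∂μ)) ^ 2 := by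
  have hfg : Integrable (fun ω => f ω * g ω) μ := rm_integrable_mul hf hg
  have hint : ∫ ω, (f ω + g ω) ^ 2 ∂μ
      = ∫ ω, f ω ^ 2 ∂μ + 2 * ∫ ω, f ω * g ω ∂μ + ∫ ω, g ω ^ 2 ∂μ := by
    have e : ∀ ω, (f ω + g ω) ^ 2 = (f ω ^ 2 + 2 * (f ω * g ω)) + g ω ^ 2 := fun ω => by ring
    calc ∫ ω, (f ω + g ω) ^ 2 ∂μ
        = ∫ ω, (f ω ^ 2 + 2 * (f ω * g ω)) + g ω ^ 2 ∂μ := integral_congr_ae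
          (Eventually.of_forall e)
      _ = (∫ ω, f ω ^ 2 + 2 * (f ω * g ω) ∂μ) + ∫ ω, g ω ^ 2 ∂μ :=
          integral_add (hf.integrable_sq.add (hfg.const_mul 2)) hg.integrable_sq
      _ = (∫ ω, f ω ^ 2 ∂μ + ∫ ω, 2 * (f ω * g ω) ∂μ) + ∫ ω, g ω ^ 2 ∂μ := by
          rw [integral_add hf.integrable_sq (hfg.const_mul 2)]
      _ = ∫ ω, f ω ^ 2 ∂μ + 2 * ∫ ω, f ω * g ω ∂μ + ∫ ω, g ω ^ 2 ∂μ := by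
          rw [integral_const_mul]
  have hcs : ∫ ω, f ω * g ω ∂μ ≤ Real.sqrt (∫ ω, f ω ^ 2 ∂μ) * Real.sqrt (∫ ω, g ω ^ 2 ∂μ) :=
    rm_cs hf hg
  have s1 := Real.sq_sqrt (rm_int_sq_nonneg (μ := μ) f)
  have s2 := Real.sq_sqrt (rm_int_sq_nonneg (μ := μ) g)
  nlinarith [Real.sqrt_nonneg (∫ ω, f ω ^ 2 ∂μ), Real.sqrt_nonneg (∫ ω, g ω ^ 2 ∂μ)]

lemma rm_memLp_max {f g : Ω → ℝ} (hf : MemLp f 2 μ) (hg : MemLp g 2 μ) :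
    MemLp (fun ω => max (f ω) (g ω)) 2 μ := by
  refine MemLp.of_le (hf.abs.add hg.abs) (hf.aestronglyMeasurable.sup hg.aestronglyMeasurable) ?_
  filter_upwards with ω
  simp only [Real.norm_eq_abs, Pi.add_apply, abs_abs]
  have h1 : |f ω ⊔ g ω| ≤ |f ω| + |g ω| :=
    (abs_max_le_max_abs_abs).trans (max_le (le_add_of_nonneg_right (abs_nonneg _))
      (le_add_of_nonneg_left (abs_nonneg _)))
  calc |f ω ⊔ g ω| ≤ |f ω| + |g ω| := h1
    _ ≤ |(|f ω| + |g ω|)| := le_abs_self _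

lemma rm_memLp_sup' {ι : Type*} {s : Finset ι} (hs : s.Nonempty) {f : ι → Ω → ℝ}
    (hf : ∀ i ∈ s, MemLp (f i) 2 μ) :
    MemLp (fun ω => s.sup' hs fun i => f i ω) 2 μ := by
  revert hf
  induction hs using Finset.Nonempty.cons_induction with
  | singleton a => intro hf; simpa using hf a (by simp)
  | cons a t ha ht ih =>
    intro hf
    have e : (fun ω => (Finset.cons a t ha).sup' (Finset.cons_nonempty ha) fun i => f i ω)
        = fun ω => max (f a ω) (t.sup' ht fun i => f i ω) := by
      funext ω; exact Finset.sup'_cons ht (fun i => f i ω)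
    rw [e]
    exact rm_memLp_max (hf a (by simp)) (ih fun i hi => hf i (by simp [hi]))

lemma rm_abs_int_le {f : Ω → ℝ} [IsProbabilityMeasure μ] (hf : MemLp f 2 μ) :
    ∫ ω, |f ω| ∂μ ≤ Real.sqrt (∫ ω, f ω ^ 2 ∂μ) := by
  have h := rm_cs (μ := μ) (f := fun ω => |f ω|) (g := fun _ => (1:ℝ)) hf.abs (memLp_const 1)
  simp only [mul_one, sq_abs, one_pow, integral_const, measure_univ, ENNReal.toReal_one,
    smul_eq_mul, Real.sqrt_one] at h
  simpa using h

lemma rm_ae_summable {f : ℕ → Ω → ℝ} (hm : ∀ k, AEStronglyMeasurable (f k) μ)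
    (hnn : ∀ k ω, 0 ≤ f k ω) (hint : ∀ k, Integrable (f k) μ)
    {c : ℕ → ℝ} (hc : ∀ k, ∫ ω, f k ω ∂μ ≤ c k) (hs : Summable c) :
    ∀ᵐ ω ∂μ, Summable fun k => f k ω := by
  have hae : ∀ k, AEMeasurable (fun ω => ENNReal.ofReal (f k ω)) μ :=
    fun k => (hm k).aemeasurable.ennreal_ofReal
  have h1 : ∫⁻ ω, ∑' k, ENNReal.ofReal (f k ω) ∂μ = ∑' k, ∫⁻ ω, ENNReal.ofReal (f k ω) ∂μ :=
    lintegral_tsum hae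
  have h2 : ∀ k, ∫⁻ ω, ENNReal.ofReal (f k ω) ∂μ = ENNReal.ofReal (∫ ω, f k ω ∂μ) :=
    fun k => (ofReal_integral_eq_lintegral_ofReal (hint k)
      (Eventually.of_forall fun ω => hnn k ω)).symm
  have h3 : ∑' k, ∫⁻ ω, ENNReal.ofReal (f k ω) ∂μ < ⊤ := by
    simp only [h2]
    have hc' : ∀ k, ENNReal.ofReal (∫ ω, f k ω ∂μ) ≤ ENNReal.ofReal (c k) :=
      fun k => ENNReal.ofReal_le_ofReal (hc k)
    calc ∑' k, ENNReal.ofReal (∫ ω, f k ω ∂μ) ≤ ∑' k, ENNReal.ofReal (c k) :=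
          ENNReal.tsum_le_tsum hc'
      _ = ENNReal.ofReal (∑' k, c k) := by
          rw [ENNReal.ofReal_tsum_of_nonneg (fun k => le_trans (integral_nonneg (hnn k)) (hc k)) hs]
      _ < ⊤ := ENNReal.ofReal_lt_top
  have h4 : ∀ᵐ ω ∂μ, ∑' k, ENNReal.ofReal (f k ω) < ⊤ := by
    refine ae_lt_top' (AEMeasurable.ennreal_tsum hae) ?_
    rw [h1]; exact h3.ne
  filter_upwards [h4] with ω hω
  have := ENNReal.summable_toReal hω.ne
  refine this.congr fun k => ?_
  rw [ENNReal.toReal_ofReal (hnn k ω)]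

end helpers
section core
variable {Ω : Type*} {m0 : MeasurableSpace Ω}

def rmS (X : ℕ → Ω → ℝ) (β : ℕ → ℝ) (a b : ℕ) (ω : Ω) : ℝ :=
  ∑ i ∈ Finset.Ioc a b, β i * X i ω

noncomputable def rmM (X : ℕ → Ω → ℝ) (β : ℕ → ℝ) (a b : ℕ) (ω : Ω) : ℝ :=
  (insert a (Finset.Ioc a b)).sup' (Finset.insert_nonempty a _) fun n => |rmS X β a n ω|

noncomputable def rmV (μ : Measure Ω) (X : ℕ → Ω → ℝ) (β : ℕ → ℝ) (i : ℕ) : ℝ :=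
  β i ^ 2 * variance (X i) μ

def rmT (ρ : ℕ → ℝ) (i : ℕ) : ℝ := ∑ j ∈ Finset.range (i + 1), ρ j

noncomputable def rmG (μ : Measure Ω) (X : ℕ → Ω → ℝ) (β : ℕ → ℝ) (ρ : ℕ → ℝ) (a b : ℕ) : ℝ :=
  ∑ i ∈ Finset.Ioc a b, rmV μ X β i * rmT ρ i

variable {μ : Measure Ω} {X : ℕ → Ω → ℝ} {β : ℕ → ℝ} {ρ : ℕ → ℝ}

lemma rmS_self (a : ℕ) (ω : Ω) : rmS X β a a ω = 0 := by simp [rmS]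

lemma rmS_add {a c b : ℕ} (h1 : a ≤ c) (h2 : c ≤ b) (ω : Ω) :
    rmS X β a b ω = rmS X β a c ω + rmS X β c b ω := by
  rw [rmS, rmS, rmS, Finset.sum_Ioc_consecutive _ h1 h2]

lemma rmS_memLp (hL2 : ∀ i, 1 ≤ i → MemLp (X i) 2 μ) {a : ℕ} (ha : 1 ≤ a) (b : ℕ) :
    MemLp (rmS X β a b) 2 μ := by
  show MemLp (fun ω => ∑ i ∈ Finset.Ioc a b, β i * X i ω) 2 μ
  exact memLp_finset_sum (Finset.Ioc a b) fun i hi =>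
    (hL2 i (ha.trans (Finset.mem_Ioc.1 hi).1.le)).const_mul (β i)

lemma abs_rmS_le_rmM {a b n : ℕ} (hn : n ∈ insert a (Finset.Ioc a b)) (ω : Ω) :
    |rmS X β a n ω| ≤ rmM X β a b ω :=
  Finset.le_sup' (fun n => |rmS X β a n ω|) hn

lemma rmM_nonneg (a b : ℕ) (ω : Ω) : 0 ≤ rmM X β a b ω := by
  have := abs_rmS_le_rmM (a := a) (b := b) (n := a) (β := β) (X := X)
    (Finset.mem_insert_self a _) ω
  rw [rmS_self] at this; simpa using this

lemma rmM_le {a b : ℕ} {ω : Ω} {t : ℝ}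
    (h : ∀ n ∈ insert a (Finset.Ioc a b), |rmS X β a n ω| ≤ t) : rmM X β a b ω ≤ t :=
  Finset.sup'_le _ _ h

lemma rmM_memLp (hL2 : ∀ i, 1 ≤ i → MemLp (X i) 2 μ) {a : ℕ} (ha : 1 ≤ a) (b : ℕ) :
    MemLp (rmM X β a b) 2 μ :=
  rm_memLp_sup' _ fun n _ => (rmS_memLp hL2 ha n).abs

lemma rmV_nonneg (μ : Measure Ω) (X : ℕ → Ω → ℝ) (β : ℕ → ℝ) (i : ℕ) : 0 ≤ rmV μ X β i :=
  mul_nonneg (sq_nonneg _) (variance_nonneg _ _)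

lemma rmT_nonneg (hρnn : ∀ k, 0 ≤ ρ k) (i : ℕ) : 0 ≤ rmT ρ i :=
  Finset.sum_nonneg fun j _ => hρnn j

lemma rmG_nonneg (hρnn : ∀ k, 0 ≤ ρ k) (a b : ℕ) : 0 ≤ rmG μ X β ρ a b :=
  Finset.sum_nonneg fun i _ => mul_nonneg (rmV_nonneg μ X β i) (rmT_nonneg hρnn i)

lemma rmG_add {a c b : ℕ} (h1 : a ≤ c) (h2 : c ≤ b) :
    rmG μ X β ρ a b = rmG μ X β ρ a c + rmG μ X β ρ c b := by
  rw [rmG, rmG, rmG, Finset.sum_Ioc_consecutive _ h1 h2]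

lemma rmG_mono (hρnn : ∀ k, 0 ≤ ρ k) {a c b : ℕ} (h1 : a ≤ c) (h2 : c ≤ b) :
    rmG μ X β ρ a c ≤ rmG μ X β ρ a b := by
  rw [rmG_add h1 h2]
  have := rmG_nonneg (μ := μ) (X := X) (β := β) hρnn c b
  linarith

lemma rm_dist_sum (hρnn : ∀ k, 0 ≤ ρ k) {a b i : ℕ} (ha : 1 ≤ a) (hb : b ≤ 2 * a + 2)
    (hi : i ∈ Finset.Ioc a b) :
    ∑ j ∈ Finset.Ioc a b, ρ (Nat.dist i j) ≤ 2 * rmT ρ i := by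
  rw [Finset.mem_Ioc] at hi
  set s := Finset.Ioc a b with hs
  have hsplit := Finset.sum_filter_add_sum_filter_not s (fun j => j ≤ i)
      (fun j => ρ (Nat.dist i j))
  have h1 : ∑ j ∈ s.filter (fun j => j ≤ i), ρ (Nat.dist i j) ≤ rmT ρ i := by
    have hinj : ∀ x ∈ s.filter (fun j => j ≤ i), ∀ y ∈ s.filter (fun j => j ≤ i),
        Nat.dist i x = Nat.dist i y → x = y := by
      intro x hx y hy hxy
      simp only [Finset.mem_filter, hs, Finset.mem_Ioc] at hx hy
      simp only [Nat.dist] at hxy; omega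
    calc ∑ j ∈ s.filter (fun j => j ≤ i), ρ (Nat.dist i j)
        = ∑ d ∈ (s.filter (fun j => j ≤ i)).image (fun j => Nat.dist i j), ρ d :=
          (Finset.sum_image hinj).symm
      _ ≤ ∑ d ∈ Finset.range (i + 1), ρ d := by
          refine Finset.sum_le_sum_of_subset_of_nonneg ?_ fun d _ _ => hρnn d
          intro d hd
          simp only [Finset.mem_image, Finset.mem_filter, hs, Finset.mem_Ioc] at hd
          obtain ⟨j, hj, rfl⟩ := hd
          simp only [Finset.mem_range, Nat.dist]; omega
  have h2 : ∑ j ∈ s.filter (fun j => ¬ j ≤ i), ρ (Nat.dist i j) ≤ rmT ρ i := by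
    have hinj : ∀ x ∈ s.filter (fun j => ¬ j ≤ i), ∀ y ∈ s.filter (fun j => ¬ j ≤ i),
        Nat.dist i x = Nat.dist i y → x = y := by
      intro x hx y hy hxy
      simp only [Finset.mem_filter, hs, Finset.mem_Ioc] at hx hy
      simp only [Nat.dist] at hxy; omega
    calc ∑ j ∈ s.filter (fun j => ¬ j ≤ i), ρ (Nat.dist i j)
        = ∑ d ∈ (s.filter (fun j => ¬ j ≤ i)).image (fun j => Nat.dist i j), ρ d :=
          (Finset.sum_image hinj).symm
      _ ≤ ∑ d ∈ Finset.range (i + 1), ρ d := by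
          refine Finset.sum_le_sum_of_subset_of_nonneg ?_ fun d _ _ => hρnn d
          intro d hd
          simp only [Finset.mem_image, Finset.mem_filter, hs, Finset.mem_Ioc] at hd
          obtain ⟨j, hj, rfl⟩ := hd
          simp only [Finset.mem_range, Nat.dist]; omega
  rw [rmT]; rw [rmT] at h1 h2
  linarith

end core
section var
variable {Ω : Type*} {m0 : MeasurableSpace Ω} {μ : Measure Ω} {X : ℕ → Ω → ℝ} {β : ℕ → ℝ} {ρ : ℕ → ℝ}

lemma rm_var_S [IsProbabilityMeasure μ] (hL2 : ∀ i, 1 ≤ i → MemLp (X i) 2 μ)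
    (hρnn : ∀ k, 0 ≤ ρ k)
    (hcov : ∀ i j, 1 ≤ i → 1 ≤ j →
      |∫ ω, X i ω * X j ω ∂μ| ≤
        ρ (Nat.dist i j) * Real.sqrt (variance (X i) μ) * Real.sqrt (variance (X j) μ))
    {a b : ℕ} (ha : 1 ≤ a) (hb : b ≤ 2 * a + 2) :
    ∫ ω, rmS X β a b ω ^ 2 ∂μ ≤ 2 * rmG μ X β ρ a b := by
  set s := Finset.Ioc a b with hs
  have hone : ∀ i ∈ s, 1 ≤ i := fun i hi => ha.trans (Finset.mem_Ioc.1 hi).1.le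
  have hY : ∀ i ∈ s, MemLp (fun ω => β i * X i ω) 2 μ :=
    fun i hi => (hL2 i (hone i hi)).const_mul (β i)
  -- expansion
  have hexp : ∫ ω, rmS X β a b ω ^ 2 ∂μ
      = ∑ i ∈ s, ∑ j ∈ s, ∫ ω, (β i * X i ω) * (β j * X j ω) ∂μ := by
    have e : ∀ ω, rmS X β a b ω ^ 2
        = ∑ i ∈ s, ∑ j ∈ s, (β i * X i ω) * (β j * X j ω) := by
      intro ω
      rw [rmS, sq, Finset.sum_mul_sum]
    rw [integral_congr_ae (Eventually.of_forall e),
      integral_finset_sum s (fun i hi => integrable_finset_sum s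
        (fun j hj => rm_integrable_mul (hY i hi) (hY j hj)))]
    exact Finset.sum_congr rfl fun i hi =>
      integral_finset_sum s fun j hj => rm_integrable_mul (hY i hi) (hY j hj)
  -- termwise bound
  have key : ∀ i ∈ s, ∀ j ∈ s, ∫ ω, (β i * X i ω) * (β j * X j ω) ∂μ
      ≤ ρ (Nat.dist i j) * ((rmV μ X β i + rmV μ X β j) / 2) := by
    intro i hi j hj
    have e1 : ∫ ω, (β i * X i ω) * (β j * X j ω) ∂μ
        = (β i * β j) * ∫ ω, X i ω * X j ω ∂μ := by
      rw [← integral_const_mul]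
      exact integral_congr_ae (Eventually.of_forall fun ω => by ring)
    rw [e1]
    have h2 : (β i * β j) * ∫ ω, X i ω * X j ω ∂μ ≤ |β i| * |β j| * |∫ ω, X i ω * X j ω ∂μ| := by
      calc (β i * β j) * ∫ ω, X i ω * X j ω ∂μ ≤ |(β i * β j) * ∫ ω, X i ω * X j ω ∂μ| :=
            le_abs_self _
        _ = |β i| * |β j| * |∫ ω, X i ω * X j ω ∂μ| := by rw [abs_mul, abs_mul]
    refine h2.trans ?_
    have h3 := hcov i j (hone i hi) (hone j hj)
    have habs : ∀ k : ℕ, 0 ≤ |β k| := fun k => abs_nonneg _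
    have h4 : |β i| * |β j| * |∫ ω, X i ω * X j ω ∂μ|
        ≤ ρ (Nat.dist i j) * (|β i| * Real.sqrt (variance (X i) μ))
          * (|β j| * Real.sqrt (variance (X j) μ)) := by
      calc |β i| * |β j| * |∫ ω, X i ω * X j ω ∂μ|
          ≤ |β i| * |β j| * (ρ (Nat.dist i j) * Real.sqrt (variance (X i) μ)
            * Real.sqrt (variance (X j) μ)) := by
            exact mul_le_mul_of_nonneg_left h3 (mul_nonneg (habs i) (habs j))
        _ = ρ (Nat.dist i j) * (|β i| * Real.sqrt (variance (X i) μ))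
            * (|β j| * Real.sqrt (variance (X j) μ)) := by ring
    refine h4.trans ?_
    have hsq : ∀ k : ℕ, |β k| * Real.sqrt (variance (X k) μ) = Real.sqrt (rmV μ X β k) := by
      intro k
      rw [rmV, Real.sqrt_mul (sq_nonneg _), Real.sqrt_sq_eq_abs]
    rw [hsq i, hsq j]
    have hv1 := rmV_nonneg μ X β i
    have hv2 := rmV_nonneg μ X β j
    have s1 := Real.sq_sqrt hv1
    have s2 := Real.sq_sqrt hv2
    have hρ := hρnn (Nat.dist i j)
    nlinarith [sq_nonneg (Real.sqrt (rmV μ X β i) - Real.sqrt (rmV μ X β j)),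
      Real.sqrt_nonneg (rmV μ X β i), Real.sqrt_nonneg (rmV μ X β j)]
  -- sum the bound
  rw [hexp]
  have step1 : ∑ i ∈ s, ∑ j ∈ s, ∫ ω, (β i * X i ω) * (β j * X j ω) ∂μ
      ≤ ∑ i ∈ s, ∑ j ∈ s, ρ (Nat.dist i j) * ((rmV μ X β i + rmV μ X β j) / 2) :=
    Finset.sum_le_sum fun i hi => Finset.sum_le_sum fun j hj => key i hi j hj
  refine step1.trans ?_
  have step2 : ∑ i ∈ s, ∑ j ∈ s, ρ (Nat.dist i j) * ((rmV μ X β i + rmV μ X β j) / 2)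
      = ∑ i ∈ s, ∑ j ∈ s, ρ (Nat.dist i j) * rmV μ X β i := by
    have e : ∀ i j : ℕ, ρ (Nat.dist i j) * ((rmV μ X β i + rmV μ X β j) / 2)
        = (ρ (Nat.dist i j) * rmV μ X β i) / 2 + (ρ (Nat.dist i j) * rmV μ X β j) / 2 := by
      intro i j; ring
    simp only [e, Finset.sum_add_distrib]
    have hswap : ∑ i ∈ s, ∑ j ∈ s, (ρ (Nat.dist i j) * rmV μ X β j) / 2
        = ∑ i ∈ s, ∑ j ∈ s, (ρ (Nat.dist i j) * rmV μ X β i) / 2 := by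
      rw [Finset.sum_comm]
      refine Finset.sum_congr rfl fun i _ => Finset.sum_congr rfl fun j _ => ?_
      rw [Nat.dist_comm]
    rw [hswap, ← Finset.sum_add_distrib]
    refine Finset.sum_congr rfl fun i _ => ?_
    rw [← Finset.sum_add_distrib]
    refine Finset.sum_congr rfl fun j _ => by ring
  rw [step2]
  have step3 : ∑ i ∈ s, ∑ j ∈ s, ρ (Nat.dist i j) * rmV μ X β i
      ≤ ∑ i ∈ s, rmV μ X β i * (2 * rmT ρ i) := by
    refine Finset.sum_le_sum fun i hi => ?_
    rw [← Finset.sum_mul, mul_comm (rmV μ X β i)]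
    exact mul_le_mul_of_nonneg_right (rm_dist_sum hρnn ha hb (hs ▸ hi)) (rmV_nonneg μ X β i)
  refine step3.trans ?_
  rw [rmG, Finset.mul_sum]
  exact le_of_eq (Finset.sum_congr rfl fun i _ => by ring)
end var
section maxsec
variable {Ω : Type*} {m0 : MeasurableSpace Ω} {μ : Measure Ω} {X : ℕ → Ω → ℝ} {β : ℕ → ℝ} {ρ : ℕ → ℝ}

lemma rm_max_bound [IsProbabilityMeasure μ] (hL2 : ∀ i, 1 ≤ i → MemLp (X i) 2 μ)
    (hρnn : ∀ k, 0 ≤ ρ k)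
    (hcov : ∀ i j, 1 ≤ i → 1 ≤ j →
      |∫ ω, X i ω * X j ω ∂μ| ≤
        ρ (Nat.dist i j) * Real.sqrt (variance (X i) μ) * Real.sqrt (variance (X j) μ))
    (p : ℕ) :
    ∀ a b : ℕ, 1 ≤ a → a < b → b ≤ 2 * a + 2 → b ≤ a + 2 ^ p →
    ∫ ω, rmM X β a b ω ^ 2 ∂μ ≤ ((p : ℝ) + 1) ^ 2 * (2 * rmG μ X β ρ a b) := by
  induction p with
  | zero =>
    intro a b ha hab hb hp
    have hba : b = a + 1 := by simpa using Nat.le_antisymm hp hab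
    subst hba
    have hM : ∀ ω, rmM X β a (a + 1) ω = |rmS X β a (a + 1) ω| := by
      intro ω
      refine le_antisymm (rmM_le fun n hn => ?_) (abs_rmS_le_rmM (by simp) ω)
      simp only [Finset.mem_insert, Finset.mem_Ioc] at hn
      rcases hn with rfl | ⟨h1, h2⟩
      · rw [rmS_self]; simp
      · have : n = a + 1 := by omega
        subst this; exact le_rfl
    have e : ∫ ω, rmM X β a (a + 1) ω ^ 2 ∂μ = ∫ ω, rmS X β a (a + 1) ω ^ 2 ∂μ := by
      refine integral_congr_ae (Eventually.of_forall fun ω => ?_)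
      show rmM X β a (a + 1) ω ^ 2 = rmS X β a (a + 1) ω ^ 2
      rw [hM ω, sq_abs]
    rw [e]
    have := rm_var_S (β := β) hL2 hρnn hcov ha hb
    simpa using this
  | succ p ih =>
    intro a b ha hab hb hp
    by_cases hcase : b ≤ a + 2 ^ p
    · refine (ih a b ha hab hb hcase).trans ?_
      have h2G : 0 ≤ 2 * rmG μ X β ρ a b := by
        have := rmG_nonneg (μ := μ) (X := X) (β := β) hρnn a b; linarith
      have hpc : (0:ℝ) ≤ (p : ℝ) := Nat.cast_nonneg p
      push_cast
      nlinarith [mul_le_mul_of_nonneg_right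
        (show ((p:ℝ)+1)^2 ≤ ((p:ℝ)+1+1)^2 by nlinarith) h2G]
    · have hone : (1:ℕ) ≤ 2 ^ p := Nat.one_le_two_pow
      have h2p : (2:ℕ) ^ (p + 1) = 2 ^ p + 2 ^ p := by ring
      rw [h2p] at hp
      push_neg at hcase
      set c := a + (b - a + 1) / 2 with hc
      have hac : a < c := by omega
      have hcb : c < b := by omega
      have hc2 : c ≤ 2 * a + 2 := by omega
      have hb2c : b ≤ 2 * c + 2 := by omega
      have hcp : c ≤ a + 2 ^ p := by omega
      have hbp : b ≤ c + 2 ^ p := by omega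
      have hc1 : 1 ≤ c := by omega
      -- MemLp facts
      have hMS : MemLp (rmS X β a c) 2 μ := rmS_memLp hL2 ha c
      have hML : MemLp (rmM X β a c) 2 μ := rmM_memLp hL2 ha c
      have hMR : MemLp (rmM X β c b) 2 μ := rmM_memLp hL2 hc1 b
      have hmax : MemLp (fun ω => max (rmM X β a c ω) (rmM X β c b ω)) 2 μ :=
        rm_memLp_max hML hMR
      -- pointwise bound
      have hpt : ∀ ω, rmM X β a b ω
          ≤ |rmS X β a c ω| + max (rmM X β a c ω) (rmM X β c b ω) := by
        intro ω
        refine rmM_le fun n hn => ?_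
        simp only [Finset.mem_insert, Finset.mem_Ioc] at hn
        by_cases hnc : n ≤ c
        · have hn' : n ∈ insert a (Finset.Ioc a c) := by
            simp only [Finset.mem_insert, Finset.mem_Ioc]
            rcases hn with rfl | ⟨h1, h2⟩
            · exact Or.inl rfl
            · exact Or.inr ⟨h1, hnc⟩
          calc |rmS X β a n ω| ≤ rmM X β a c ω := abs_rmS_le_rmM hn' ω
            _ ≤ max (rmM X β a c ω) (rmM X β c b ω) := le_max_left _ _
            _ ≤ |rmS X β a c ω| + max (rmM X β a c ω) (rmM X β c b ω) :=
                le_add_of_nonneg_left (abs_nonneg _)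
        · push_neg at hnc
          have hnb : n ≤ b := by
            rcases hn with rfl | ⟨h1, h2⟩
            · omega
            · exact h2
          have hsplit : rmS X β a n ω = rmS X β a c ω + rmS X β c n ω :=
            rmS_add hac.le hnc.le ω
          have hmem : n ∈ insert c (Finset.Ioc c b) := by
            simp only [Finset.mem_insert, Finset.mem_Ioc]
            exact Or.inr ⟨hnc, hnb⟩
          calc |rmS X β a n ω| ≤ |rmS X β a c ω| + |rmS X β c n ω| := by
                rw [hsplit]; exact abs_add_le _ _
            _ ≤ |rmS X β a c ω| + max (rmM X β a c ω) (rmM X β c b ω) := by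
                have := (abs_rmS_le_rmM hmem ω).trans
                  (le_max_right (rmM X β a c ω) (rmM X β c b ω))
                linarith
      -- integral chain
      have hD : MemLp (fun ω => |rmS X β a c ω|
          + max (rmM X β a c ω) (rmM X β c b ω)) 2 μ := hMS.abs.add hmax
      have hint1 : ∫ ω, rmM X β a b ω ^ 2 ∂μ
          ≤ ∫ ω, (|rmS X β a c ω| + max (rmM X β a c ω) (rmM X β c b ω)) ^ 2 ∂μ := by
        refine integral_mono_of_nonneg (Eventually.of_forall fun ω => sq_nonneg _)
          hD.integrable_sq (Eventually.of_forall fun ω => ?_)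
        exact pow_le_pow_left₀ (rmM_nonneg a b ω) (hpt ω) 2
      have hint2 := rm_add_sq (μ := μ) hMS.abs hmax
      have habs_sq : ∫ ω, |rmS X β a c ω| ^ 2 ∂μ = ∫ ω, rmS X β a c ω ^ 2 ∂μ :=
        integral_congr_ae (Eventually.of_forall fun ω => sq_abs _)
      have hmaxsq : ∫ ω, (max (rmM X β a c ω) (rmM X β c b ω)) ^ 2 ∂μ
          ≤ ∫ ω, rmM X β a c ω ^ 2 ∂μ + ∫ ω, rmM X β c b ω ^ 2 ∂μ := by
        have h1 : ∫ ω, (max (rmM X β a c ω) (rmM X β c b ω)) ^ 2 ∂μ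
            ≤ ∫ ω, (rmM X β a c ω ^ 2 + rmM X β c b ω ^ 2) ∂μ := by
          refine integral_mono_of_nonneg (Eventually.of_forall fun ω => sq_nonneg _)
            (hML.integrable_sq.add hMR.integrable_sq) (Eventually.of_forall fun ω => ?_)
          show (max (rmM X β a c ω) (rmM X β c b ω)) ^ 2
              ≤ rmM X β a c ω ^ 2 + rmM X β c b ω ^ 2
          rcases max_choice (rmM X β a c ω) (rmM X β c b ω) with h | h <;> rw [h]
          · nlinarith [sq_nonneg (rmM X β c b ω)]
          · nlinarith [sq_nonneg (rmM X β a c ω)]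
        rwa [integral_add hML.integrable_sq hMR.integrable_sq] at h1
      have hIH1 := ih a c ha hac hc2 hcp
      have hIH2 := ih c b hc1 hcb hb2c hbp
      have hvar := rm_var_S (β := β) hL2 hρnn hcov ha hc2
      set Gab := rmG μ X β ρ a b with hGab
      have hGnn : (0:ℝ) ≤ 2 * Gab := by
        have := rmG_nonneg (μ := μ) (X := X) (β := β) hρnn a b; rw [hGab]; linarith
      have hA : ∫ ω, |rmS X β a c ω| ^ 2 ∂μ ≤ 2 * Gab := by
        rw [habs_sq]
        refine hvar.trans ?_
        have := rmG_mono (μ := μ) (X := X) (β := β) hρnn hac.le hcb.le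
        rw [hGab]; linarith
      have hB : ∫ ω, (max (rmM X β a c ω) (rmM X β c b ω)) ^ 2 ∂μ
          ≤ ((p:ℝ) + 1) ^ 2 * (2 * Gab) := by
        refine hmaxsq.trans ?_
        have hadd := rmG_add (μ := μ) (X := X) (β := β) (ρ := ρ) hac.le hcb.le
        have hIH1' := ih a c ha hac hc2 hcp
        have hIH2' := ih c b hc1 hcb hb2c hbp
        rw [hGab, hadd]; linarith
      have hsA : Real.sqrt (∫ ω, |rmS X β a c ω| ^ 2 ∂μ) ≤ Real.sqrt (2 * Gab) :=
        Real.sqrt_le_sqrt hA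
      have hsB : Real.sqrt (∫ ω, (max (rmM X β a c ω) (rmM X β c b ω)) ^ 2 ∂μ)
          ≤ ((p:ℝ) + 1) * Real.sqrt (2 * Gab) := by
        have e2 : ((p:ℝ) + 1) ^ 2 * (2 * Gab) = (((p:ℝ) + 1) * Real.sqrt (2 * Gab)) ^ 2 := by
          rw [mul_pow, Real.sq_sqrt hGnn]
        calc Real.sqrt (∫ ω, (max (rmM X β a c ω) (rmM X β c b ω)) ^ 2 ∂μ)
            ≤ Real.sqrt (((p:ℝ) + 1) ^ 2 * (2 * Gab)) := Real.sqrt_le_sqrt hB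
          _ = ((p:ℝ) + 1) * Real.sqrt (2 * Gab) := by
              rw [e2, Real.sqrt_sq (by positivity)]
      calc ∫ ω, rmM X β a b ω ^ 2 ∂μ
          ≤ (Real.sqrt (∫ ω, |rmS X β a c ω| ^ 2 ∂μ)
            + Real.sqrt (∫ ω, (max (rmM X β a c ω) (rmM X β c b ω)) ^ 2 ∂μ)) ^ 2 :=
            le_trans hint1 hint2
        _ ≤ (Real.sqrt (2 * Gab) + ((p:ℝ) + 1) * Real.sqrt (2 * Gab)) ^ 2 := by
            refine pow_le_pow_left₀ (by positivity) (add_le_add hsA hsB) 2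
        _ = (((p:ℕ) + 1 : ℕ) + 1 : ℝ) ^ 2 * (2 * Gab) := by
            rw [show Real.sqrt (2 * Gab) + ((p:ℝ) + 1) * Real.sqrt (2 * Gab)
              = ((p:ℝ) + 2) * Real.sqrt (2 * Gab) by ring, mul_pow, Real.sq_sqrt hGnn]
            push_cast; ring
end maxsec
section summ
variable {Ω : Type*} {m0 : MeasurableSpace Ω} {μ : Measure Ω} {X : ℕ → Ω → ℝ} {β : ℕ → ℝ} {ρ : ℕ → ℝ}

lemma rm_blocks_sum (f : ℕ → ℝ) (K : ℕ) :
    ∑ k ∈ Finset.range K, ∑ i ∈ Finset.Ioc (2 ^ k) (2 ^ (k + 1)), f i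
      = ∑ i ∈ Finset.Ioc 1 (2 ^ K), f i := by
  induction K with
  | zero => simp
  | succ K ihK =>
    rw [Finset.sum_range_succ, ihK,
      Finset.sum_Ioc_consecutive _ (Nat.one_le_two_pow) (Nat.pow_le_pow_right (by norm_num) K.le_succ)]

lemma rm_log_weight {k i : ℕ} (hi : i ∈ Finset.Ioc (2 ^ k) (2 ^ (k + 1))) :
    ((k : ℝ) + 1) ^ 2 ≤ (2 / Real.log 2) ^ 2 * Real.log i ^ 2 := by
  rw [Finset.mem_Ioc] at hi
  have hlog2 : 0 < Real.log 2 := Real.log_pos one_lt_two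
  have hik : (2:ℝ) ^ k ≤ (i:ℝ) := by
    have : (2:ℕ) ^ k ≤ i := hi.1.le
    exact_mod_cast this
  have hi2 : (2:ℝ) ≤ (i:ℝ) := by
    have : 2 ≤ i := by
      have := hi.1; have := Nat.one_le_two_pow (n := k); omega
    exact_mod_cast this
  have h1 : (k : ℝ) * Real.log 2 ≤ Real.log i := by
    calc (k : ℝ) * Real.log 2 = Real.log ((2:ℝ) ^ k) := by rw [Real.log_pow]
      _ ≤ Real.log i := Real.log_le_log (by positivity) hik
  have h2 : Real.log 2 ≤ Real.log i := Real.log_le_log (by norm_num) hi2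
  have h3 : ((k : ℝ) + 1) * Real.log 2 ≤ 2 * Real.log i := by nlinarith
  have h4 : (0:ℝ) ≤ ((k : ℝ) + 1) * Real.log 2 := by positivity
  have h5 := mul_self_le_mul_self h4 h3
  have h6 : ((k : ℝ) + 1) ^ 2 * Real.log 2 ^ 2 ≤ 4 * Real.log i ^ 2 := by nlinarith
  rw [div_pow, div_mul_eq_mul_div, le_div_iff₀ (by positivity)]
  nlinarith

lemma rm_summable_c (hρnn : ∀ k, 0 ≤ ρ k)
    (hsum : Summable fun i : ℕ =>
      β i ^ 2 * variance (X i) μ * Real.log i ^ 2 * ∑ j ∈ Finset.range (i + 1), ρ j) :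
    Summable (fun k : ℕ => ((k : ℝ) + 1) ^ 2 * (2 * rmG μ X β ρ (2 ^ k) (2 ^ (k + 1)))) := by
  set w : ℕ → ℝ := fun i => β i ^ 2 * variance (X i) μ * Real.log i ^ 2 * rmT ρ i with hw
  have hws : Summable w := hsum
  have hwnn : ∀ i, 0 ≤ w i := fun i =>
    mul_nonneg (mul_nonneg (mul_nonneg (sq_nonneg _) (variance_nonneg _ _)) (sq_nonneg _))
      (rmT_nonneg hρnn i)
  set C : ℝ := (2 / Real.log 2) ^ 2 with hC
  have hCnn : 0 ≤ C := sq_nonneg _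
  refine summable_of_sum_range_le (c := 2 * C * ∑' i, w i) (fun k => ?_) (fun K => ?_)
  · have := rmG_nonneg (μ := μ) (X := X) (β := β) hρnn (2 ^ k) (2 ^ (k + 1))
    positivity
  · have hterm : ∀ k : ℕ, ((k : ℝ) + 1) ^ 2 * (2 * rmG μ X β ρ (2 ^ k) (2 ^ (k + 1)))
        ≤ ∑ i ∈ Finset.Ioc (2 ^ k) (2 ^ (k + 1)), 2 * C * w i := by
      intro k
      rw [rmG, Finset.mul_sum, Finset.mul_sum]
      refine Finset.sum_le_sum fun i hi => ?_
      have hlog := rm_log_weight hi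
      have hVT : 0 ≤ rmV μ X β i * rmT ρ i :=
        mul_nonneg (rmV_nonneg μ X β i) (rmT_nonneg hρnn i)
      have e : 2 * C * w i = 2 * (C * Real.log i ^ 2) * (rmV μ X β i * rmT ρ i) := by
        rw [hw, rmV]; ring
      rw [e]
      calc ((k : ℝ) + 1) ^ 2 * (2 * (rmV μ X β i * rmT ρ i))
          = 2 * ((k : ℝ) + 1) ^ 2 * (rmV μ X β i * rmT ρ i) := by ring
        _ ≤ 2 * (C * Real.log i ^ 2) * (rmV μ X β i * rmT ρ i) := by
            refine mul_le_mul_of_nonneg_right ?_ hVT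
            rw [hC]; linarith
    calc ∑ k ∈ Finset.range K, ((k : ℝ) + 1) ^ 2 * (2 * rmG μ X β ρ (2 ^ k) (2 ^ (k + 1)))
        ≤ ∑ k ∈ Finset.range K, ∑ i ∈ Finset.Ioc (2 ^ k) (2 ^ (k + 1)), 2 * C * w i :=
          Finset.sum_le_sum fun k _ => hterm k
      _ = ∑ i ∈ Finset.Ioc 1 (2 ^ K), 2 * C * w i := rm_blocks_sum _ K
      _ = 2 * C * ∑ i ∈ Finset.Ioc 1 (2 ^ K), w i := by rw [Finset.mul_sum]
      _ ≤ 2 * C * ∑' i, w i := by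
          refine mul_le_mul_of_nonneg_left ?_ (by positivity)
          exact Summable.sum_le_tsum _ (fun i _ => hwnn i) hws

lemma rm_summable_d (hρnn : ∀ k, 0 ≤ ρ k)
    (hsum : Summable fun i : ℕ =>
      β i ^ 2 * variance (X i) μ * Real.log i ^ 2 * ∑ j ∈ Finset.range (i + 1), ρ j) :
    Summable (fun k : ℕ => Real.sqrt (2 * rmG μ X β ρ (2 ^ k) (2 ^ (k + 1)))) := by
  have hc := rm_summable_c (μ := μ) (X := X) (β := β) hρnn hsum
  have hinv : Summable (fun k : ℕ => (1 / ((k : ℝ) + 1)) ^ 2) := by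
    have h0 : Summable (fun n : ℕ => 1 / (n : ℝ) ^ 2) := by
      exact_mod_cast Real.summable_one_div_nat_pow.mpr one_lt_two
    have h1 := (summable_nat_add_iff 1).mpr h0
    refine h1.congr fun k => ?_
    push_cast; rw [div_pow, one_pow]
  have hg : Summable (fun k : ℕ => (((k : ℝ) + 1) ^ 2 * (2 * rmG μ X β ρ (2 ^ k) (2 ^ (k + 1)))
      + (1 / ((k : ℝ) + 1)) ^ 2) / 2) := (hc.add hinv).div_const 2
  refine Summable.of_nonneg_of_le (fun k => Real.sqrt_nonneg _) (fun k => ?_) hg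
  have hx : (0:ℝ) ≤ 2 * rmG μ X β ρ (2 ^ k) (2 ^ (k + 1)) := by
    have := rmG_nonneg (μ := μ) (X := X) (β := β) hρnn (2 ^ k) (2 ^ (k + 1)); linarith
  set x := 2 * rmG μ X β ρ (2 ^ k) (2 ^ (k + 1))
  have hq : (0:ℝ) < (k : ℝ) + 1 := by positivity
  have hs := Real.sq_sqrt hx
  have hssx := Real.sqrt_nonneg x
  have h7 : ((k:ℝ)+1) * Real.sqrt x * (1/((k:ℝ)+1)) = Real.sqrt x := by
    field_simp
  nlinarith [sq_nonneg (((k:ℝ)+1) * Real.sqrt x - 1/((k:ℝ)+1))]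
end summ

/-- Rademacher–Menchoff for quasi-stationary sequences.  Let
`(X_n)_{n≥1}` be square-integrable with `E X_i = 0` and
`|Cov(X_i, X_j)| ≤ ρ(|i−j|) √(Var X_i) √(Var X_j)` where `ρ ≥ 0`, `ρ(0) = 1`.  If
`∑_{i≥2} β_i² Var(X_i) (log i)² (∑_{j=0}^i ρ(j)) < ∞`, then `∑_{i≥1} β_i X_i` converges
almost surely. -/
theorem stmt_16 {Ω : Type*} {m0 : MeasurableSpace Ω} (μ : Measure Ω) [IsProbabilityMeasure μ]
    (X : ℕ → Ω → ℝ) (hL2 : ∀ i, 1 ≤ i → MemLp (X i) 2 μ)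
    (hmean : ∀ i, 1 ≤ i → ∫ ω, X i ω ∂μ = 0)
    (ρ : ℕ → ℝ) (hρnn : ∀ k, 0 ≤ ρ k) (hρ0 : ρ 0 = 1)
    (hcov : ∀ i j, 1 ≤ i → 1 ≤ j →
      |∫ ω, X i ω * X j ω ∂μ| ≤
        ρ (Nat.dist i j) * Real.sqrt (variance (X i) μ) * Real.sqrt (variance (X j) μ))
    (β : ℕ → ℝ)
    (hsum : Summable fun i : ℕ =>
      β i ^ 2 * variance (X i) μ * Real.log i ^ 2 * ∑ j ∈ Finset.range (i + 1), ρ j) :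
    ∀ᵐ ω ∂μ, ∃ l : ℝ,
      Filter.Tendsto (fun n => ∑ i ∈ Finset.Icc 1 n, β i * X i ω) Filter.atTop (nhds l) := by
  have hcs := rm_summable_c (μ := μ) (X := X) (β := β) hρnn hsum
  have hds := rm_summable_d (μ := μ) (X := X) (β := β) hρnn hsum
  have hap : ∀ k : ℕ, (1:ℕ) ≤ 2 ^ k := fun k => Nat.one_le_two_pow
  have hlt : ∀ k : ℕ, (2:ℕ) ^ k < 2 ^ (k + 1) :=
    fun k => Nat.pow_lt_pow_right one_lt_two k.lt_succ_self
  have hle2 : ∀ k : ℕ, (2:ℕ) ^ (k + 1) ≤ 2 * 2 ^ k + 2 := by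
    intro k; rw [pow_succ]; omega
  have hlep : ∀ k : ℕ, (2:ℕ) ^ (k + 1) ≤ 2 ^ k + 2 ^ k := by
    intro k; rw [pow_succ]; omega
  -- block maximal bound
  have hblock : ∀ k : ℕ, ∫ ω, rmM X β (2 ^ k) (2 ^ (k + 1)) ω ^ 2 ∂μ
      ≤ ((k : ℝ) + 1) ^ 2 * (2 * rmG μ X β ρ (2 ^ k) (2 ^ (k + 1))) := by
    intro k
    exact rm_max_bound hL2 hρnn hcov k (2 ^ k) (2 ^ (k + 1)) (hap k) (hlt k) (hle2 k) (hlep k)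
  have hMLp : ∀ k : ℕ, MemLp (rmM X β (2 ^ k) (2 ^ (k + 1))) 2 μ :=
    fun k => rmM_memLp hL2 (hap k) _
  have hSLp : ∀ k : ℕ, MemLp (rmS X β (2 ^ k) (2 ^ (k + 1))) 2 μ :=
    fun k => rmS_memLp hL2 (hap k) _
  -- a.s. summability of M^2
  have hae1 : ∀ᵐ ω ∂μ, Summable fun k => rmM X β (2 ^ k) (2 ^ (k + 1)) ω ^ 2 := by
    refine rm_ae_summable (fun k => ((hMLp k).integrable_sq).aestronglyMeasurable)
      (fun k ω => sq_nonneg _) (fun k => (hMLp k).integrable_sq) (fun k => hblock k) hcs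
  -- a.s. summability of |block sums|
  have hae2 : ∀ᵐ ω ∂μ, Summable fun k => |rmS X β (2 ^ k) (2 ^ (k + 1)) ω| := by
    refine rm_ae_summable (fun k => ((hSLp k).abs.integrable one_le_two).aestronglyMeasurable)
      (fun k ω => abs_nonneg _) (fun k => (hSLp k).abs.integrable one_le_two)
      (fun k => ?_) hds
    have h1 := rm_abs_int_le (hSLp k)
    have h2 := rm_var_S (β := β) hL2 hρnn hcov (hap k) (hle2 k)
    exact h1.trans (Real.sqrt_le_sqrt h2)
  -- Nat.log 2 tendsto atTop
  have hlogT : Tendsto (fun n : ℕ => Nat.log 2 n) atTop atTop := by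
    refine tendsto_atTop_atTop.2 fun m => ⟨2 ^ m, fun n hn => ?_⟩
    have hn0 : n ≠ 0 := by have := hap m; omega
    exact (Nat.le_log_iff_pow_le one_lt_two hn0).2 hn
  filter_upwards [hae1, hae2] with ω h1 h2
  -- limit of dyadic partial sums
  have hsum2 : Summable fun k => rmS X β (2 ^ k) (2 ^ (k + 1)) ω := h2.of_abs
  obtain ⟨L, hL⟩ := hsum2
  have hpartial : Tendsto (fun K => rmS X β 1 (2 ^ K) ω) atTop (nhds L) := by
    have ht := hL.tendsto_sum_nat
    refine ht.congr fun K => ?_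
    exact rm_blocks_sum (fun i => β i * X i ω) K
  -- M_k → 0
  have hMto : Tendsto (fun k => rmM X β (2 ^ k) (2 ^ (k + 1)) ω) atTop (nhds 0) := by
    have h0 := h1.tendsto_atTop_zero
    have hcont := (Real.continuous_sqrt.tendsto 0).comp h0
    rw [Real.sqrt_zero] at hcont
    refine hcont.congr fun k => ?_
    exact Real.sqrt_sq (rmM_nonneg _ _ ω)
  -- convergence of S 1 n
  have hkey : Tendsto (fun n => rmS X β 1 n ω) atTop (nhds L) := by
    rw [tendsto_iff_dist_tendsto_zero]
    have hg : Tendsto (fun k => |rmS X β 1 (2 ^ k) ω - L| + rmM X β (2 ^ k) (2 ^ (k + 1)) ω)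
        atTop (nhds 0) := by
      have ha : Tendsto (fun k => |rmS X β 1 (2 ^ k) ω - L|) atTop (nhds 0) := by
        have := hpartial.sub_const L
        rw [sub_self] at this
        simpa using this.abs
      simpa using ha.add hMto
    have hcomp := hg.comp hlogT
    refine squeeze_zero' (Eventually.of_forall fun n => dist_nonneg)
      ((eventually_ge_atTop 1).mono fun n hn => ?_) hcomp
    set e := Nat.log 2 n with he
    have hn0 : n ≠ 0 := by omega
    have hge : 2 ^ e ≤ n := Nat.pow_log_le_self 2 hn0
    have hlt' : n < 2 ^ (e + 1) := Nat.lt_pow_succ_log_self one_lt_two n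
    have hsplit : rmS X β 1 n ω = rmS X β 1 (2 ^ e) ω + rmS X β (2 ^ e) n ω :=
      rmS_add (hap e) hge ω
    have hmem : n ∈ insert (2 ^ e) (Finset.Ioc (2 ^ e) (2 ^ (e + 1))) := by
      simp only [Finset.mem_insert, Finset.mem_Ioc]
      rcases Nat.eq_or_lt_of_le hge with h | h
      · exact Or.inl h.symm
      · exact Or.inr ⟨h, hlt'.le.trans (le_refl _) |>.trans (le_refl _) |>.trans (le_refl _)⟩
    have hMb : |rmS X β (2 ^ e) n ω| ≤ rmM X β (2 ^ e) (2 ^ (e + 1)) ω :=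
      abs_rmS_le_rmM hmem ω
    show dist (rmS X β 1 n ω) L
        ≤ |rmS X β 1 (2 ^ e) ω - L| + rmM X β (2 ^ e) (2 ^ (e + 1)) ω
    rw [Real.dist_eq, hsplit]
    calc |rmS X β 1 (2 ^ e) ω + rmS X β (2 ^ e) n ω - L|
        ≤ |rmS X β 1 (2 ^ e) ω - L| + |rmS X β (2 ^ e) n ω| := by
          have := abs_add_le (rmS X β 1 (2 ^ e) ω - L) (rmS X β (2 ^ e) n ω)
          rw [show rmS X β 1 (2 ^ e) ω - L + rmS X β (2 ^ e) n ω
            = rmS X β 1 (2 ^ e) ω + rmS X β (2 ^ e) n ω - L by ring] at this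
          exact this
      _ ≤ |rmS X β 1 (2 ^ e) ω - L| + rmM X β (2 ^ e) (2 ^ (e + 1)) ω := by linarith
  -- conclude
  refine ⟨β 1 * X 1 ω + L, ?_⟩
  have hfinal := (tendsto_const_nhds (x := β 1 * X 1 ω)).add hkey
  refine Tendsto.congr' ?_ hfinal
  filter_upwards [eventually_ge_atTop 1] with n hn
  rw [Finset.Icc_eq_cons_Ioc hn, Finset.sum_cons]
  rfl
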